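/- Local complementation preserves connectivity: for any undirected irreflexive graph G and vertex u, two vertices a and b are in the same connected component of G if and only if they are in the same connected component of G ⋆ u. -/

import Mathlib

/-- Local complementation of `G` about `u`: edges between distinct neighbours of `u`
are complemented, all other adjacencies preserved. -/
def localComp {V : Type*} (G : SimpleGraph V) (u : V) : SimpleGraph V where
  Adj a b := (G.Adj a b ∧ ¬(G.Adj u a ∧ G.Adj u b ∧ a ≠ b)) ∨
             (¬ G.Adj a b ∧ (G.Adj u a ∧ G.Adj u b ∧ a ≠ b))
  symm := by
    refine ⟨?_⟩
    intro a b h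
    rcases h with ⟨h1, h2⟩ | ⟨h1, h2, h3, h4⟩
    · exact Or.inl ⟨h1.symm, fun ⟨x, y, z⟩ => h2 ⟨y, x, z.symm⟩⟩
    · exact Or.inr ⟨fun hc => h1 hc.symm, h3, h2, h4.symm⟩
  loopless := by
    refine ⟨?_⟩
    intro a h
    rcases h with ⟨h1, _⟩ | ⟨_, _, _, h4⟩
    · exact G.loopless.irrefl a h1
    · exact h4 rfl



lemma reachable_of_adj_reachable {V : Type*} {G H : SimpleGraph V}
    (h : ∀ a b, G.Adj a b → H.Reachable a b) {a b : V} (hr : G.Reachable a b) :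
    H.Reachable a b := by
  obtain ⟨w⟩ := hr
  induction w with
  | nil => exact SimpleGraph.Reachable.refl _
  | cons hadj _ ih => exact (h _ _ hadj).trans ih

/-- Local complementation preserves connectivity: a and b are connected in G iff
they are connected in G ⋆ u. -/
theorem localComp_reachable_iff {V : Type*} (G : SimpleGraph V) (u : V) (a b : V) :
    G.Reachable a b ↔ (localComp G u).Reachable a b := by
  constructor
  · refine reachable_of_adj_reachable (fun x y hxy => ?_)
    by_cases hc : G.Adj u x ∧ G.Adj u y ∧ x ≠ y
    · have hux : (localComp G u).Adj u x := Or.inl ⟨hc.1, fun ⟨h1, _, _⟩ => G.loopless.irrefl u h1⟩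
      have huy : (localComp G u).Adj u y := Or.inl ⟨hc.2.1, fun ⟨h1, _, _⟩ => G.loopless.irrefl u h1⟩
      exact (SimpleGraph.Adj.reachable hux.symm).trans huy.reachable
    · exact SimpleGraph.Adj.reachable (Or.inl ⟨hxy, hc⟩)
  · refine reachable_of_adj_reachable (fun x y hxy => ?_)
    rcases hxy with ⟨h1, _⟩ | ⟨_, h2, h3, _⟩
    · exact h1.reachable
    · exact (SimpleGraph.Adj.reachable h2.symm).trans h3.reachable
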